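/- Let $g:(0,\infty)\to[0,\infty]$ be nonincreasing, let $S_n=(2^{-(n+1)},2^{-n}]$ for $n\in\mathbb N$, let $c\in(0,1)$, and let $B\subseteq(0,\infty)$ be a Lebesgue measurable set such that $\lambda(B\cap S_n)\le c\,\lambda(S_n)=c\,2^{-(n+1)}$ for some fixed $n$. Then $\int_{B\cap S_n} g\,d\lambda \le \frac{2c}{1-c}\int_{((0,\infty)\setminus B)\cap S_{n+1}} g\,d\lambda$. -/

import Mathlib

open MeasureTheory

/-- Shell-by-shell comparison: for nonincreasing `g : (0,∞) → [0,∞]`, shells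
`S_n = (2^{-(n+1)}, 2^{-n}]`, and a measurable `B ⊆ (0,∞)` occupying at most a
fraction `c` of each shell, the integral of `g` over `B ∩ S_n` is bounded by
`(2c/(1-c))` times the integral over `(B^c) ∩ S_{n+1}`. -/
theorem stmt7 (g : ℝ → ENNReal) (hg : AntitoneOn g (Set.Ioi 0))
    (c : ℝ) (hc : c ∈ Set.Ioo (0:ℝ) 1)
    (B : Set ℝ) (hB : MeasurableSet B) (hB0 : B ⊆ Set.Ioi 0)
    (hmeas : ∀ m : ℕ,
      volume (B ∩ Set.Ioc ((2:ℝ) ^ (-((m:ℝ) + 1))) ((2:ℝ) ^ (-(m:ℝ))))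
        ≤ ENNReal.ofReal (c * (2:ℝ) ^ (-((m:ℝ) + 1))))
    (n : ℕ) :
    ∫⁻ x in B ∩ Set.Ioc ((2:ℝ) ^ (-((n:ℝ) + 1))) ((2:ℝ) ^ (-(n:ℝ))), g x
      ≤ ENNReal.ofReal (2 * c / (1 - c)) *
        ∫⁻ x in (Set.Ioi (0:ℝ) \ B) ∩
            Set.Ioc ((2:ℝ) ^ (-((n:ℝ) + 2))) ((2:ℝ) ^ (-((n:ℝ) + 1))), g x := by
  obtain ⟨hc0, hc1⟩ := hc
  set a : ℝ := (2:ℝ) ^ (-((n:ℝ) + 1)) with ha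
  set b : ℝ := (2:ℝ) ^ (-(n:ℝ)) with hb
  set e : ℝ := (2:ℝ) ^ (-((n:ℝ) + 2)) with he
  have hapos : 0 < a := Real.rpow_pos_of_pos two_pos _
  have hepos : 0 < e := Real.rpow_pos_of_pos two_pos _
  have hea : e < a := by
    rw [ha, he, Real.rpow_lt_rpow_left_iff one_lt_two]; linarith
  have ha2e : a = 2 * e := by
    rw [ha, he, show -((n:ℝ)+1) = -((n:ℝ)+2) + 1 by ring,
      Real.rpow_add two_pos, Real.rpow_one]; ring
  -- the target shell S_{n+1}
  set T : Set ℝ := Set.Ioc e a with hT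
  have hTmeas : MeasurableSet T := measurableSet_Ioc
  have hTpos : ∀ x ∈ T, (0:ℝ) < x := fun x hx => lt_trans hepos hx.1
  have hinter : (Set.Ioi (0:ℝ) \ B) ∩ T = T \ B := by
    ext x
    constructor
    · rintro ⟨⟨_, hxB⟩, hxT⟩; exact ⟨hxT, hxB⟩
    · rintro ⟨hxT, hxB⟩; exact ⟨⟨hTpos x hxT, hxB⟩, hxT⟩
  -- volume of T
  have hvolT : volume T = ENNReal.ofReal e := by
    rw [hT, Real.volume_Ioc, show a - e = e by linarith]
  -- volume of B ∩ T
  have hmTB : volume (B ∩ T) ≤ ENNReal.ofReal (c * e) := by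
    have h := hmeas (n+1)
    have h1 : -(((n+1:ℕ):ℝ)+1) = -((n:ℝ)+2) := by push_cast; ring
    have h2 : -((n+1:ℕ):ℝ) = -((n:ℝ)+1) := by push_cast; ring
    rw [h1, h2] at h
    exact h
  -- volume lower bound on T \ B
  have hvolTB : ENNReal.ofReal ((1 - c) * e) ≤ volume (T \ B) := by
    have hle : volume T ≤ volume (T \ B) + volume (T ∩ B) := by
      calc volume T = volume ((T \ B) ∪ (T ∩ B)) := by rw [Set.diff_union_inter]
        _ ≤ volume (T \ B) + volume (T ∩ B) := measure_union_le _ _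
    have hsub : ENNReal.ofReal ((1 - c) * e)
        = ENNReal.ofReal e - ENNReal.ofReal (c * e) := by
      rw [← ENNReal.ofReal_sub _ (by positivity)]
      ring_nf
    rw [hsub, tsub_le_iff_right]
    calc ENNReal.ofReal e = volume T := hvolT.symm
      _ ≤ volume (T \ B) + volume (T ∩ B) := hle
      _ ≤ volume (T \ B) + ENNReal.ofReal (c * e) := by
          gcongr
          rw [Set.inter_comm]; exact hmTB
  -- upper bound of integral over B ∩ S_n by g a
  have hup : ∫⁻ x in B ∩ Set.Ioc a b, g x ≤ g a * ENNReal.ofReal (c * a) := by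
    calc ∫⁻ x in B ∩ Set.Ioc a b, g x
        ≤ ∫⁻ _ in B ∩ Set.Ioc a b, g a := by
          apply setLIntegral_mono' (hB.inter measurableSet_Ioc)
          intro x hx
          exact hg (Set.mem_Ioi.mpr hapos)
            (Set.mem_Ioi.mpr (lt_trans hapos hx.2.1)) (le_of_lt hx.2.1)
      _ = g a * volume (B ∩ Set.Ioc a b) := by
          rw [setLIntegral_const]
      _ ≤ g a * ENNReal.ofReal (c * a) := by gcongr; exact hmeas n
  -- lower bound of integral over T \ B by g a
  have hlow : g a * ENNReal.ofReal ((1 - c) * e) ≤ ∫⁻ x in T \ B, g x := by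
    calc g a * ENNReal.ofReal ((1 - c) * e)
        ≤ g a * volume (T \ B) := by gcongr
      _ = ∫⁻ _ in T \ B, g a := by rw [setLIntegral_const]
      _ ≤ ∫⁻ x in T \ B, g x := by
          apply setLIntegral_mono' (hTmeas.diff hB)
          intro x hx
          exact hg (Set.mem_Ioi.mpr (hTpos x hx.1))
            (Set.mem_Ioi.mpr hapos) hx.1.2
  -- combine
  rw [hinter]
  calc ∫⁻ x in B ∩ Set.Ioc a b, g x
      ≤ g a * ENNReal.ofReal (c * a) := hup
    _ = ENNReal.ofReal (2 * c / (1 - c)) * (g a * ENNReal.ofReal ((1 - c) * e)) := by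
        rw [show g a * ENNReal.ofReal ((1 - c) * e)
            = ENNReal.ofReal ((1 - c) * e) * g a from mul_comm _ _,
          ← mul_assoc, ← ENNReal.ofReal_mul
            (div_nonneg (by linarith) (by linarith)),
          show (2 * c / (1 - c)) * ((1 - c) * e) = c * a by
            have h1c : (1:ℝ) - c ≠ 0 := by linarith
            rw [ha2e]; field_simp,
          mul_comm]
    _ ≤ ENNReal.ofReal (2 * c / (1 - c)) * ∫⁻ x in T \ B, g x := by gcongr
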